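/- Let d ≥ 1, N ≥ 2, and let L_d : (ℝ × ℝ^d) × (ℝ × ℝ^d) → ℝ, written L_d(t, q, t', q'), be differentiable and time-translation invariant, i.e. L_d(t + s, q, t' + s, q') = L_d(t, q, t', q') for all s ∈ ℝ and all arguments. Let (t, q) : {0, 1, …, N} → ℝ × ℝ^d satisfy the extended discrete energy equation D₃L_d(t_{k−1}, q_{k−1}, t_k, q_k) + D₁L_d(t_k, q_k, t_{k+1}, q_{k+1}) = 0 for all 1 ≤ k ≤ N−1. Define the discrete energy E_k := −D₃L_d(t_{k−1}, q_{k−1}, t_k, q_k) for 1 ≤ k ≤ N. Then the discrete energy is exactly conserved: E_{k+1} = E_k for all 1 ≤ k ≤ N−1. -/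

import Mathlib

lemma key_sum_zero
    {d : ℕ}
    (Ld : (ℝ × EuclideanSpace ℝ (Fin d)) × (ℝ × EuclideanSpace ℝ (Fin d)) → ℝ)
    (hLd : Differentiable ℝ Ld)
    (hinv : ∀ (s t t' : ℝ) (x x' : EuclideanSpace ℝ (Fin d)),
      Ld ((t + s, x), (t' + s, x')) = Ld ((t, x), (t', x')))
    (a b : ℝ) (x x' : EuclideanSpace ℝ (Fin d)) :
    deriv (fun u => Ld ((u, x), (b, x'))) a
      + deriv (fun v => Ld ((a, x), (v, x'))) b = 0 := by
  set pt : (ℝ × EuclideanSpace ℝ (Fin d)) × (ℝ × EuclideanSpace ℝ (Fin d)) :=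
    ((a, x), (b, x')) with hpt
  have hF := (hLd pt).hasFDerivAt
  have h1 : HasDerivAt (fun u : ℝ => (((u, x), (b, x')) :
      (ℝ × EuclideanSpace ℝ (Fin d)) × (ℝ × EuclideanSpace ℝ (Fin d))))
      (((1, 0), (0, 0))) a :=
    ((hasDerivAt_id a).prodMk (hasDerivAt_const a x)).prodMk
      (hasDerivAt_const a ((b, x') : ℝ × EuclideanSpace ℝ (Fin d)))
  have ha : HasDerivAt (fun u => Ld ((u, x), (b, x')))
      (fderiv ℝ Ld pt (((1, 0), (0, 0)))) a := hF.comp_hasDerivAt a h1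
  have h2 : HasDerivAt (fun v : ℝ => (((a, x), (v, x')) :
      (ℝ × EuclideanSpace ℝ (Fin d)) × (ℝ × EuclideanSpace ℝ (Fin d))))
      (((0, 0), (1, 0))) b :=
    (hasDerivAt_const b ((a, x) : ℝ × EuclideanSpace ℝ (Fin d))).prodMk
      ((hasDerivAt_id b).prodMk (hasDerivAt_const b x'))
  have hb : HasDerivAt (fun v => Ld ((a, x), (v, x')))
      (fderiv ℝ Ld pt (((0, 0), (1, 0)))) b := hF.comp_hasDerivAt b h2
  have h3 : HasDerivAt (fun s : ℝ => (((a + s, x), (b + s, x')) :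
      (ℝ × EuclideanSpace ℝ (Fin d)) × (ℝ × EuclideanSpace ℝ (Fin d))))
      (((1, 0), (1, 0))) (0 : ℝ) := by
    have hA : HasDerivAt (fun s : ℝ => a + s) 1 0 := (hasDerivAt_id 0).const_add a
    have hB : HasDerivAt (fun s : ℝ => b + s) 1 0 := (hasDerivAt_id 0).const_add b
    exact (hA.prodMk (hasDerivAt_const 0 x)).prodMk (hB.prodMk (hasDerivAt_const 0 x'))
  have hcomp : HasDerivAt (fun s : ℝ => Ld ((a + s, x), (b + s, x')))
      (fderiv ℝ Ld pt (((1, 0), (1, 0)))) 0 := by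
    have hF' : HasFDerivAt Ld (fderiv ℝ Ld pt) ((a + 0, x), (b + 0, x')) := by
      simpa [hpt] using hF
    exact hF'.comp_hasDerivAt 0 h3
  have hconst : HasDerivAt (fun s : ℝ => Ld ((a + s, x), (b + s, x'))) 0 0 := by
    have : (fun s : ℝ => Ld ((a + s, x), (b + s, x')))
        = fun _ => Ld ((a, x), (b, x')) := funext fun s => hinv s a b x x'
    rw [this]; exact hasDerivAt_const _ _
  have hzero : fderiv ℝ Ld pt (((1, 0), (1, 0))) = 0 :=
    hcomp.unique hconst
  have hsum : fderiv ℝ Ld pt (((1, 0), (0, 0))) + fderiv ℝ Ld pt (((0, 0), (1, 0)))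
      = fderiv ℝ Ld pt (((1, 0), (1, 0))) := by
    rw [← (fderiv ℝ Ld pt).map_add]
    norm_num [Prod.ext_iff]
  rw [ha.deriv, hb.deriv, hsum, hzero]

/-- **Exact discrete energy conservation for time-translation invariant extended discrete
Lagrangians.**  If the differentiable extended discrete Lagrangian `L_d(t, q, t', q')` is
time-translation invariant and the extended discrete path `(t, q)` satisfies the extended
discrete energy equation
`D₃L_d(t_{k−1}, q_{k−1}, t_k, q_k) + D₁L_d(t_k, q_k, t_{k+1}, q_{k+1}) = 0` for
`1 ≤ k ≤ N−1`, then the discrete energy `E_k = −D₃L_d(t_{k−1}, q_{k−1}, t_k, q_k)` is exactly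
conserved: `E_{k+1} = E_k` for `1 ≤ k ≤ N−1`. -/
theorem discrete_energy_conserved_of_time_translation_invariance
    (d : ℕ) (hd : 1 ≤ d) (N : ℕ) (hN : 2 ≤ N)
    (Ld : (ℝ × EuclideanSpace ℝ (Fin d)) × (ℝ × EuclideanSpace ℝ (Fin d)) → ℝ)
    (hLd : Differentiable ℝ Ld)
    (hinv : ∀ (s t t' : ℝ) (x x' : EuclideanSpace ℝ (Fin d)),
      Ld ((t + s, x), (t' + s, x')) = Ld ((t, x), (t', x')))
    (t : ℕ → ℝ) (q : ℕ → EuclideanSpace ℝ (Fin d))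
    (henergy : ∀ k : ℕ, 1 ≤ k → k + 1 ≤ N →
      deriv (fun s => Ld ((t (k - 1), q (k - 1)), (s, q k))) (t k)
        + deriv (fun s => Ld ((s, q k), (t (k + 1), q (k + 1)))) (t k) = 0)
    (E : ℕ → ℝ)
    (hE : ∀ k : ℕ, 1 ≤ k → k ≤ N →
      E k = -deriv (fun s => Ld ((t (k - 1), q (k - 1)), (s, q k))) (t k)) :
    ∀ k : ℕ, 1 ≤ k → k + 1 ≤ N → E (k + 1) = E k := by
  intro k hk1 hkN
  have hEk := hE k hk1 (by omega)
  have hEk1 := hE (k + 1) (by omega) hkN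
  have hkey := key_sum_zero Ld hLd hinv (t k) (t (k + 1)) (q k) (q (k + 1))
  have hen := henergy k hk1 hkN
  have hsimp : k + 1 - 1 = k := by omega
  rw [hsimp] at hEk1
  -- E(k+1) = -D₃(t k, t (k+1)) = D₁(t k, t(k+1)) = -D₃(t(k-1), t k) = E k
  rw [hEk1, hEk]
  linarith
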